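/- In the Mallows model with reference ranking σ* and dispersion φ ∈ (0,1], for any integer Δ ≥ 1 the quantity g(Δ) = (∑_{z=1}^{Δ} z φ^{z−1}) / ((∑_{z=0}^{Δ−1} φ^z)(∑_{z=0}^{Δ} φ^z)) satisfies g(Δ) ≥ 1/2. -/

import Mathlib

open Finset

private lemma sum_pow_le (φ : ℝ) (hφ0 : 0 < φ) (hφ1 : φ ≤ 1) (n : ℕ) :
    (∑ z ∈ range n, φ ^ z) ≤ n := by
  calc (∑ z ∈ range n, φ ^ z) ≤ ∑ z ∈ range n, (1:ℝ) := by
        apply Finset.sum_le_sum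
        intro i _
        exact pow_le_one₀ hφ0.le hφ1
    _ = n := by simp

private lemma sum_pow_pos (φ : ℝ) (hφ0 : 0 < φ) (n : ℕ) (hn : 1 ≤ n) :
    0 < ∑ z ∈ range n, φ ^ z := by
  apply Finset.sum_pos
  · intro i _; positivity
  · exact nonempty_range_iff.mpr (by omega)

private lemma key (φ : ℝ) (hφ0 : 0 < φ) (hφ1 : φ ≤ 1) :
    ∀ Δ, 1 ≤ Δ →
      (∑ z ∈ range Δ, φ ^ z) * (∑ z ∈ range (Δ + 1), φ ^ z) ≤
        2 * ∑ z ∈ Icc 1 Δ, (z : ℝ) * φ ^ (z - 1) := by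
  intro Δ hΔ
  induction Δ, hΔ using Nat.le_induction with
  | base => simp [Finset.sum_range_succ]; nlinarith
  | succ n hn ih =>
    have hS1 : (∑ z ∈ range (n+1), φ ^ z) ≤ n + 1 := by
      have := sum_pow_le φ hφ0 hφ1 (n+1); push_cast at this ⊢; linarith
    have hS0 : (∑ z ∈ range n, φ ^ z) ≤ n := sum_pow_le φ hφ0 hφ1 n
    have hpow1 : φ ^ (n+1) ≤ 1 := pow_le_one₀ hφ0.le hφ1
    have hpown : (0:ℝ) < φ ^ n := by positivity
    have hIcc : (∑ z ∈ Icc 1 (n+1), (z : ℝ) * φ ^ (z - 1)) =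
        (∑ z ∈ Icc 1 n, (z : ℝ) * φ ^ (z - 1)) + (n+1) * φ ^ n := by
      rw [Finset.sum_Icc_succ_top (by omega)]
      push_cast; ring
    rw [hIcc]
    have ha : (∑ z ∈ range (n+1), φ ^ z) = (∑ z ∈ range n, φ ^ z) + φ ^ n :=
      Finset.sum_range_succ _ n
    have hb : (∑ z ∈ range (n+1+1), φ ^ z) = (∑ z ∈ range (n+1), φ ^ z) + φ ^ (n+1) :=
      Finset.sum_range_succ _ (n+1)
    have h1 : φ ^ n * (∑ z ∈ range (n+1), φ ^ z) ≤ φ ^ n * (n+1) :=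
      mul_le_mul_of_nonneg_left hS1 hpown.le
    have h2 : φ ^ (n+1) * (∑ z ∈ range n, φ ^ z) ≤ φ ^ n * n := by
      have : φ ^ (n+1) ≤ φ ^ n := pow_le_pow_of_le_one hφ0.le hφ1 (by omega)
      have hSnn : (0:ℝ) ≤ ∑ z ∈ range n, φ ^ z :=
        Finset.sum_nonneg (fun i _ => by positivity)
      calc φ ^ (n+1) * (∑ z ∈ range n, φ ^ z) ≤ φ ^ n * (∑ z ∈ range n, φ ^ z) :=
            mul_le_mul_of_nonneg_right this hSnn
        _ ≤ φ ^ n * n := mul_le_mul_of_nonneg_left hS0 hpown.le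
    have h3 : φ ^ n * φ ^ (n+1) ≤ φ ^ n * 1 := mul_le_mul_of_nonneg_left hpow1 hpown.le
    nlinarith [ha, hb, h1, h2, h3, ih]

theorem mallows_marginal_ge_half (φ : ℝ) (hφ0 : 0 < φ) (hφ1 : φ ≤ 1)
    (Δ : ℕ) (hΔ : 1 ≤ Δ) :
    (1 : ℝ) / 2 ≤
      (∑ z ∈ Finset.Icc 1 Δ, (z : ℝ) * φ ^ (z - 1)) /
        ((∑ z ∈ Finset.range Δ, φ ^ z) * (∑ z ∈ Finset.range (Δ + 1), φ ^ z)) := by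
  have hD : 0 < (∑ z ∈ range Δ, φ ^ z) * (∑ z ∈ range (Δ + 1), φ ^ z) :=
    mul_pos (sum_pow_pos φ hφ0 Δ hΔ) (sum_pow_pos φ hφ0 (Δ+1) (by omega))
  rw [div_le_div_iff₀ (by norm_num) hD]
  linarith [key φ hφ0 hφ1 Δ hΔ]
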